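/- Let G be a graph model and suppose α ∈ M^G − N^G for closed λ-terms M, N. Then there exists a finite subpair A ≤ G such that for every partial pair B with A ≤ B ≤ G, we have α ∈ M^B − N^B. -/
import Mathlib


/-- Untyped λ-terms in de Bruijn notation. -/
inductive Term : Type
  | var : ℕ → Term
  | app : Term → Term → Term
  | lam : Term → Term
  deriving DecidableEq

namespace Term

/-- Lifting (shifting) of de Bruijn indices at cutoff `d`. -/
def lift (d : ℕ) : Term → Term
  | var n => if n < d then var n else var (n + 1)
  | app M N => app (lift d M) (lift d N)
  | lam M => lam (lift (d + 1) M)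

/-- Capture-avoiding substitution of `s` for index `k`. -/
def subst : Term → ℕ → Term → Term
  | var n, k, s => if n = k then s else if k < n then var (n - 1) else var n
  | app M N, k, s => app (subst M k s) (subst N k s)
  | lam M, k, s => lam (subst M (k + 1) (lift 0 s))

/-- One-step β-reduction (compatible closure of the β-rule). -/
inductive Step : Term → Term → Prop
  | beta (M N : Term) : Step (app (lam M) N) (subst M 0 N)
  | appL {M M' : Term} (N : Term) : Step M M' → Step (app M N) (app M' N)
  | appR (M : Term) {N N' : Term} : Step N N' → Step (app M N) (app M N')
  | xi {M M' : Term} : Step M M' → Step (lam M) (lam M')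

/-- β-conversion: the equivalence relation generated by one-step β-reduction. -/
def BetaConv : Term → Term → Prop := Relation.EqvGen Step

/-- An effective bijective numeration of λ-terms. -/
def encodeT : Term → ℕ
  | var n => 3 * n
  | app M N => 3 * Nat.pair (encodeT M) (encodeT N) + 1
  | lam M => 3 * encodeT M + 2

/-- `ClosedUnder k M`: all free de Bruijn indices of `M` are `< k`. -/
def ClosedUnder : ℕ → Term → Prop
  | k, var n => n < k
  | k, app M N => ClosedUnder k M ∧ ClosedUnder k N
  | k, lam M => ClosedUnder (k + 1) M

/-- Closed λ-terms. -/
def Closed (M : Term) : Prop := ClosedUnder 0 M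

end Term

/-- A set of λ-terms is recursively enumerable (w.r.t. the fixed effective
numeration `encodeT`) if membership is the domain of a partial recursive function. -/
def TermRE (X : Set Term) : Prop :=
  ∃ f : ℕ →. ℕ, Nat.Partrec f ∧ ∀ M : Term, M ∈ X ↔ (f (Term.encodeT M)).Dom

/-- A set of λ-terms closed under β-conversion. -/
def BetaClosed (X : Set Term) : Prop :=
  ∀ M N : Term, M ∈ X → Term.BetaConv M N → N ∈ X

/-- Extend an environment by pushing a new value for de Bruijn index `0`. -/
def consEnv {G : Type*} (d : Set G) (ρ : ℕ → Set G) : ℕ → Set G :=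
  fun k => match k with
  | 0 => d
  | k + 1 => ρ k

/-- Interpretation of λ-terms in a graph model `(G, c)`, where `c : G* × G → G`
is the (injective, total) code map and environments send variables to subsets of `G`. -/
def ginterp {G : Type*} (c : Finset G × G → G) : Term → (ℕ → Set G) → Set G
  | Term.var n, ρ => ρ n
  | Term.app M N, ρ =>
      {α | ∃ a : Finset G, ↑a ⊆ ginterp c N ρ ∧ c (a, α) ∈ ginterp c M ρ}
  | Term.lam M, ρ =>
      {β | ∃ (a : Finset G) (α : G), β = c (a, α) ∧ α ∈ ginterp c M (consEnv ↑a ρ)}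

/-- The λ-term `δ = λx.xx`. -/
def deltaTerm : Term := Term.lam (Term.app (Term.var 0) (Term.var 0))

/-- The λ-term `Ω = (λx.xx)(λx.xx)`. -/
def omegaTerm : Term := Term.app deltaTerm deltaTerm

/-- A partial pair on an ambient set of "web elements" `G`: a carrier set `A ⊆ G`
together with a partial code map `c_A : A* × A ⇀ A` (represented by `Option`). -/
structure PartialPair (G : Type*) where
  carrier : Set G
  code : Finset G × G → Option G

namespace PartialPair

/-- Well-formedness of a partial pair: the domain and values of the partial code
map lie in the carrier, and the code map is injective (where defined). -/
def Good {G : Type*} (P : PartialPair G) : Prop :=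
  (∀ (a : Finset G) (α γ : G), P.code (a, α) = some γ →
      ↑a ⊆ P.carrier ∧ α ∈ P.carrier ∧ γ ∈ P.carrier) ∧
  (∀ (p q : Finset G × G) (γ : G), P.code p = some γ → P.code q = some γ → p = q)

/-- `P.Sub Q`: `P` is a subpair of `Q` (`P ≤ Q`): the carrier of `P` is contained in
that of `Q` and the code map of `Q` extends that of `P`. -/
def Sub {G : Type*} (P Q : PartialPair G) : Prop :=
  P.carrier ⊆ Q.carrier ∧
  ∀ (p : Finset G × G) (γ : G), P.code p = some γ → Q.code p = some γ

/-- Interpretation of λ-terms in a partial pair, using only the defined part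
of the partial code map. -/
def interp {G : Type*} (P : PartialPair G) : Term → (ℕ → Set G) → Set G
  | Term.var n, ρ => ρ n
  | Term.app M N, ρ =>
      {α | α ∈ P.carrier ∧ ∃ a : Finset G, ↑a ⊆ interp P N ρ ∧
        ∃ γ : G, P.code (a, α) = some γ ∧ γ ∈ interp P M ρ}
  | Term.lam M, ρ =>
      {β | ∃ (a : Finset G) (α : G), P.code (a, α) = some β ∧
        α ∈ interp P M (consEnv ↑a ρ)}

end PartialPair

/-- The total pair associated to a graph model `(G, c)` (carrier is all of `G`). -/
def fullPair {G : Type*} (c : Finset G × G → G) : PartialPair G :=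
  ⟨Set.univ, fun p => some (c p)⟩

/-- The bottom environment, mapping every variable to `∅`. -/
def botEnv {G : Type*} : ℕ → Set G := fun _ => ∅

open Classical in
/-- Restrict a total code map to a finite region. -/
noncomputable def pRestrict {G : Type*} (c : Finset G × G → G) (S : Set G) : PartialPair G :=
  ⟨S, fun p => if ↑p.1 ⊆ S ∧ p.2 ∈ S ∧ c p ∈ S then some (c p) else none⟩

lemma pRestrict_sub_full {G : Type*} (c : Finset G × G → G) (S : Set G) :
    (pRestrict c S).Sub (fullPair c) := by
  refine ⟨fun x _ => trivial, fun p γ h => ?_⟩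
  simp only [pRestrict] at h
  split_ifs at h
  exact h

lemma pRestrict_mono {G : Type*} (c : Finset G × G → G) {S T : Set G} (hST : S ⊆ T) :
    (pRestrict c S).Sub (pRestrict c T) := by
  refine ⟨hST, fun p γ h => ?_⟩
  simp only [pRestrict] at h ⊢
  split_ifs at h with hcond
  rw [if_pos ⟨fun x hx => hST (hcond.1 hx), hST hcond.2.1, hST hcond.2.2⟩]
  exact h

lemma interp_mono {G : Type*} {P Q : PartialPair G} (h : P.Sub Q) :
    ∀ (M : Term) (ρ : ℕ → Set G), P.interp M ρ ⊆ Q.interp M ρ := by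
  intro M
  induction M with
  | var n => intro ρ α hα; exact hα
  | app M N ihM ihN =>
    intro ρ α hα
    obtain ⟨hαc, a, haN, γ, hcode, hγ⟩ := hα
    exact ⟨h.1 hαc, a, fun x hx => ihN ρ (haN hx), γ, h.2 _ _ hcode, ihM ρ hγ⟩
  | lam M ih =>
    intro ρ β hβ
    obtain ⟨a, α, hcode, hα⟩ := hβ
    exact ⟨a, α, h.2 _ _ hcode, ih _ hα⟩

lemma interp_compact {G : Type*} (c : Finset G × G → G) :
    ∀ (M : Term) (ρ : ℕ → Set G) (α : G), α ∈ (fullPair c).interp M ρ →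
      ∃ S : Set G, S.Finite ∧ α ∈ (pRestrict c S).interp M ρ := by
  intro M
  induction M with
  | var n => intro ρ α hα; exact ⟨∅, Set.finite_empty, hα⟩
  | app M N ihM ihN =>
    intro ρ α hα
    obtain ⟨-, a, haN, γ, hcode, hγ⟩ := hα
    have hγc : c (a, α) = γ := by
      simpa [fullPair] using hcode
    obtain ⟨SM, hSMf, hSM⟩ := ihM ρ γ hγ
    have h1 : ∀ β : G, ∃ S : Set G, S.Finite ∧
        (β ∈ a → β ∈ (pRestrict c S).interp N ρ) := by
      intro β
      by_cases hβ : β ∈ a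
      · obtain ⟨S, hf, hm⟩ := ihN ρ β (haN hβ)
        exact ⟨S, hf, fun _ => hm⟩
      · exact ⟨∅, Set.finite_empty, fun h => absurd h hβ⟩
    choose Sb hSbf hSbm using h1
    refine ⟨SM ∪ (⋃ β ∈ (a : Set G), Sb β) ∪ ↑a ∪ {α, c (a, α)},
      ?_, ?_, a, ?_, c (a, α), ?_, ?_⟩
    · exact ((hSMf.union (Set.Finite.biUnion a.finite_toSet fun β _ => hSbf β)).union
        a.finite_toSet).union ((Set.finite_singleton _).insert _)
    · exact Set.mem_union_right _ (Set.mem_insert _ _)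
    · intro β hβ
      have hβa : β ∈ a := by exact_mod_cast hβ
      refine interp_mono (pRestrict_mono c ?_) N ρ (hSbm β hβa)
      intro x hx
      exact Or.inl (Or.inl (Or.inr (Set.mem_biUnion hβa hx)))
    · simp only [pRestrict]
      rw [if_pos]
      refine ⟨fun x hx => Or.inl (Or.inr hx), by simp, by simp⟩
    · rw [hγc]
      refine interp_mono (pRestrict_mono c ?_) M ρ hSM
      intro x hx
      exact Or.inl (Or.inl (Or.inl hx))
  | lam M ih =>
    intro ρ β hβ
    obtain ⟨a, α, hcode, hα⟩ := hβ
    have hβc : c (a, α) = β := by simpa [fullPair] using hcode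
    obtain ⟨S, hSf, hS⟩ := ih (consEnv ↑a ρ) α hα
    refine ⟨S ∪ ↑a ∪ {α, c (a, α)},
      (hSf.union a.finite_toSet).union ((Set.finite_singleton _).insert _),
      a, α, ?_, ?_⟩
    · simp only [pRestrict]
      rw [if_pos, hβc]
      exact ⟨fun x hx => Or.inl (Or.inr hx), by simp, by simp⟩
    · exact interp_mono (pRestrict_mono c fun x hx => Or.inl (Or.inl hx)) M _ hS

/-- If `α ∈ M^G − N^G` for closed `M, N` in a graph model `G`, then there is a finite
subpair `A ≤ G` such that `α ∈ M^B − N^B` for every partial pair `B` with `A ≤ B ≤ G`. -/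
theorem separating_finite_subpair {G : Type*} [Infinite G]
    (c : Finset G × G → G) (hc : Function.Injective c)
    (M N : Term) (hM : Term.Closed M) (hN : Term.Closed N) (α : G)
    (hmem : α ∈ (fullPair c).interp M botEnv)
    (hnmem : α ∉ (fullPair c).interp N botEnv) :
    ∃ A : PartialPair G, A.carrier.Finite ∧ A.Sub (fullPair c) ∧
      ∀ B : PartialPair G, A.Sub B → B.Sub (fullPair c) →
        α ∈ B.interp M botEnv ∧ α ∉ B.interp N botEnv := by
  obtain ⟨S, hSf, hS⟩ := interp_compact c M botEnv α hmem
  refine ⟨pRestrict c S, hSf, pRestrict_sub_full c S, fun B hAB hBfull => ⟨?_, ?_⟩⟩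
  · exact interp_mono hAB M botEnv hS
  · exact fun h => hnmem (interp_mono hBfull N botEnv h)
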